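/- If during one full pass of EB-BFS every batch 𝔼 satisfies that IM-BFS(T, 𝔼) has the same edge set as the tree T current when the batch is read, then the tree held by EB-BFS at the end of that pass is a BFS-tree of G. -/

import Mathlib

namespace BFSFormal

variable {V : Type} [Fintype V] [DecidableEq V]

/-- An ordered rooted tree structure on `V ∪ {r}`, where the dummy root `r`
is represented by `none`.  `parent v = none` means the parent of `v` is `r`;
`children w` lists the children of `w` in sibling order. -/
structure PreTree (V : Type) where
  parent : V → Option V
  children : Option V → List V

/-- One step of the parent function, with `r` (= `none`) absorbing. -/
def parentStep (T : PreTree V) : Option V → Option V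
  | none => none
  | some v => T.parent v

/-- `T` is an ordered spanning tree of the directed graph on `V` with edge set `E`
(augmented with the dummy root `r`): iterating the parent function from any node
reaches `r`; every tree edge `(P v, v)` with `P v ≠ r` lies in `E`; and the
children lists give, without repetition, exactly the children of each node. -/
def IsOST (E : Finset (V × V)) (T : PreTree V) : Prop :=
  (∀ v : V, ∃ k : ℕ, (parentStep T)^[k] (some v) = none) ∧
  (∀ v u : V, T.parent v = some u → (u, v) ∈ E) ∧
  (∀ w : Option V, (T.children w).Nodup) ∧
  (∀ (w : Option V) (v : V), v ∈ T.children w ↔ T.parent v = w)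

/-- Replace each node of a list by its list of children (used to pass from one
level of a subtree to the next, keeping the sibling orders). -/
def expand (T : PreTree V) (L : List V) : List V :=
  L.flatMap fun v => T.children (some v)

/-- The breadth-first listing of the nodes of `T`: for each child `c` of the root `r`
in sibling order, all nodes of the subtree rooted at `c` are listed, in level
(breadth-first) order determined by the sibling orders, before the subtree of any
later child of `r`. -/
def bfoList (T : PreTree V) : List V :=
  (T.children none).flatMap fun c =>
    (List.range (Fintype.card V + 1)).flatMap fun k => (expand T)^[k] [c]

/-- The breadth-first order of a node of `V` on `T` (the root `r` gets `0`,
the nodes of `V` get `1, …, n` in the order of `bfoList`). -/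
def bfo (T : PreTree V) (v : V) : ℕ := (bfoList T).idxOf v + 1

/-- Breadth-first order extended to `V ∪ {r}`, with `bfo r = 0`. -/
def bfoOpt (T : PreTree V) : Option V → ℕ
  | none => 0
  | some v => bfo T v

/-- `(u, v)` is a V-BFS edge with respect to `T`:
`bfo u < bfo v`, `P v ≠ r`, and `bfo u < bfo (P v)`. -/
def IsVBFS (T : PreTree V) (e : V × V) : Prop :=
  bfo T e.1 < bfo T e.2 ∧ T.parent e.2 ≠ none ∧ bfo T e.1 < bfoOpt T (T.parent e.2)

instance (T : PreTree V) (e : V × V) : Decidable (IsVBFS T e) := by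
  unfold IsVBFS; infer_instance

/-- `T` is a BFS-tree of the graph with edge set `E` : it is an ordered spanning
tree of that graph and no edge of `E` is a V-BFS edge with respect to `T`. -/
def IsBFSTree (E : Finset (V × V)) (T : PreTree V) : Prop :=
  IsOST E T ∧ ∀ e ∈ E, ¬ IsVBFS T e

/-- `LLSP E` : the number of edges of a longest simple directed path of the graph
with edge set `E`. -/
noncomputable def LLSP (E : Finset (V × V)) : ℕ :=
  sSup {k : ℕ | ∃ p : List V, p.Nodup ∧ p.Chain' (fun a b => (a, b) ∈ E) ∧
    p.length = k + 1}

/-- `EL` is an enumeration `e₁, …, e_m` of the edge set `E`. -/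
def IsEnum (E : Finset (V × V)) (EL : List (V × V)) : Prop :=
  EL.Nodup ∧ ∀ e : V × V, e ∈ EL ↔ e ∈ E

/-- The initial ordered spanning tree of EE-BFS / EB-BFS: every node of `V` is a
child of `r`, in a fixed sibling order. -/
def IsInitTree (T : PreTree V) : Prop :=
  (∀ v : V, T.parent v = none) ∧ (T.children none).Nodup ∧
  (∀ v : V, v ∈ T.children none) ∧ (∀ v : V, T.children (some v) = [])

/-- Restructuring step of EE-BFS: make `v` the rightmost child of `u` (the parent
of `v` becomes `u` and `v` is placed last in the sibling order of the children of
`u`), all other parents and sibling orders being unchanged. -/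
def restructure (T : PreTree V) (u v : V) : PreTree V where
  parent w := if w = v then some u else T.parent w
  children w :=
    if w = some u then (T.children (some u)).erase v ++ [v]
    else (T.children w).erase v

/-- Scanning a list of edges, EE-BFS style: each scanned edge that is a V-BFS edge
with respect to the current tree triggers a restructuring. -/
def EEscan (EL : List (V × V)) (T : PreTree V) : PreTree V :=
  EL.foldl (fun Tc e => if IsVBFS Tc e then restructure Tc e.1 e.2 else Tc) T

/-- One pass of EE-BFS over the fixed enumeration `EL` of `E`. -/
def EEstep (EL : List (V × V)) (T : PreTree V) : PreTree V := EEscan EL T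

/- ------------------  IM-BFS  ------------------ -/

/-- State of the deterministic BFS of IM-BFS: the FIFO queue, the set of nodes
already enqueued (adopted), and the adoption records `(new parent, child)` in
adoption order. -/
structure BFSState (V : Type) where
  queue : List V
  marked : Finset V
  adopts : List (Option V × V)

/-- Enqueue, with prospective parent `p`, the candidates in order; a node already
enqueued before is ignored (it was adopted the first time it was enqueued). -/
def enq (p : Option V) (cands : List V) (s : BFSState V) : BFSState V :=
  cands.foldl
    (fun s c =>
      if c ∈ s.marked then s
      else ⟨s.queue ++ [c], insert c s.marked, s.adopts ++ [(p, c)]⟩) s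

/-- The main loop of IM-BFS (fuel-based).  When the queue is nonempty, the first
node `u` is dequeued and visited: the children of `u` in `T` (in sibling order)
and then the targets of the edges of `EL` with source `u` (in list order) are
enqueued.  When the queue is empty, the earliest (in sibling order) not yet
enqueued child of `r` in `T` is enqueued with parent `r`; if all nodes have been
enqueued the adoption records are returned. -/
noncomputable def imBFSAux (T : PreTree V) (EL : List (V × V)) :
    ℕ → BFSState V → List (Option V × V)
  | 0, s => s.adopts
  | fuel + 1, s =>
    match s.queue with
    | u :: rest =>
        let cands := T.children (some u) ++
          (EL.filter fun e => decide (e.1 = u)).map Prod.snd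
        imBFSAux T EL fuel (enq (some u) cands ⟨rest, s.marked, s.adopts⟩)
    | [] =>
        match (T.children none).find? (fun c => decide (c ∉ s.marked)) with
        | some c => imBFSAux T EL fuel (enq none [c] s)
        | none =>
            match (Finset.univ : Finset V).toList.find?
                (fun v => decide (v ∉ s.marked)) with
            | some v => imBFSAux T EL fuel (enq none [v] s)
            | none => s.adopts

/-- `imBFS T EL` : the ordered spanning tree produced by the deterministic
breadth-first search, started at `r`, of the graph whose edges are the tree edges
of `T` together with the edges occurring in the list `EL` (Stipulation 1):
each node's new parent is the node during whose processing it was first enqueued,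
and the children of each node are ordered by adoption time. -/
noncomputable def imBFS (T : PreTree V) (EL : List (V × V)) : PreTree V :=
  let ad := imBFSAux T EL (2 * Fintype.card V + 1) ⟨[], ∅, []⟩
  { parent := fun v =>
      match ad.find? (fun pc => decide (pc.2 = v)) with
      | some pc => pc.1
      | none => none
    children := fun w => (ad.filter fun pc => decide (pc.1 = w)).map Prod.snd }

/-- The set of tree edges `(P v, v)` of `T` with `P v ≠ r`. -/
def treeEdges (T : PreTree V) : Finset (V × V) :=
  Finset.univ.filter fun e : V × V => T.parent e.2 = some e.1

/- ------------------  EB-BFS  ------------------ -/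

/-- One pass of EB-BFS (also the map `RE(𝔼₁, …, 𝔼_k)`): replace the current tree
`T` by `IM-BFS(T, 𝔼)` successively for each batch `𝔼`. -/
noncomputable def EBstep (batches : List (List (V × V))) (T : PreTree V) : PreTree V :=
  batches.foldl imBFS T

/-- The pass of EB-BFS over `batches` starting from `T` is one during which every
batch replacement leaves the edge set of the tree unchanged. -/
def CleanPass (batches : List (List (V × V))) (T : PreTree V) : Prop :=
  ∀ j < batches.length,
    (imBFS ((batches.take j).foldl imBFS T) (batches.getD j [])).parent
      = ((batches.take j).foldl imBFS T).parent

/- ------------------  the sublist S(T, 𝔼)  ------------------ -/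

/-- `S T EL` : if `EL` contains no V-BFS edge w.r.t. `T`, the empty list; otherwise,
letting `e₁ = (u₁, v₁)` be the earliest V-BFS edge of `EL` whose tail has minimal
breadth-first order among tails of V-BFS edges of `EL`, the sublist of `EL` (in the
same order) of the edges `(u, v)` at the position of `e₁` or later with
`u ≠ P(v)`, `bfo u ≥ bfo u₁` and `bfo v ≥ bfo u₁`. -/
def S (T : PreTree V) (EL : List (V × V)) : List (V × V) :=
  let vb := EL.filter fun e => decide (IsVBFS T e)
  match (vb.map fun e => bfo T e.1).min? with
  | none => []
  | some b =>
      (EL.dropWhile fun e => !(decide (IsVBFS T e) && decide (bfo T e.1 = b))).filter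
        fun e => decide (T.parent e.2 ≠ some e.1) && decide (b ≤ bfo T e.1)
          && decide (b ≤ bfo T e.2)

/-- The map sending `T` to `T_{k+1}` where `T₁ = T`, `S_j = S(T_j, E_j)` and
`T_{j+1} = IM-BFS(T_j, S_j)` (i.e. `RE(S₁, …, S_k)` with the `S`-lists recomputed
from the successively current trees). -/
noncomputable def reSstep (batches : List (List (V × V))) (T : PreTree V) : PreTree V :=
  batches.foldl (fun Tc EL => imBFS Tc (S Tc EL)) T

/-- The list `[S₁, …, S_k]` of the sublists computed along the run
`T₁ = T`, `S_j = S(T_j, E_j)`, `T_{j+1} = IM-BFS(T_j, S_j)`. -/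
noncomputable def runS (batches : List (List (V × V))) (T : PreTree V) : List (List (V × V)) :=
  (List.range batches.length).map fun j =>
    S (reSstep (batches.take j) T) (batches.getD j [])

/- ------------------  depth and depth'  ------------------ -/

/-- The depth of `v` in `T`: the number of tree edges on the path from `r` to `v`. -/
noncomputable def depth (T : PreTree V) (v : V) : ℕ :=
  sInf {k : ℕ | (parentStep T)^[k] (some v) = none}

/-- The topmost proper ancestor of `v` (the child of `r` whose subtree contains `v`). -/
noncomputable def topAnc (T : PreTree V) (v : V) : Option V :=
  (parentStep T)^[depth T v - 1] (some v)

/-- `d(T_c)` : the maximum depth in `T` of a node of the subtree of `T` rooted at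
the child `c` of `r`. -/
noncomputable def subtreeMaxDepth (T : PreTree V) (c : V) : ℕ :=
  Finset.univ.sup fun u : V => if topAnc T u = some c then depth T u else 0

/-- `depth′(v, T) = Σ_{1 ≤ l ≤ j−1} d(T_l) + depth(v, T)` where `v` belongs to the
subtree `T_j` of the `j`-th child of `r` in sibling order. -/
noncomputable def depth' (T : PreTree V) (v : V) : ℕ :=
  match topAnc T v with
  | none => depth T v
  | some c =>
      (((T.children none).takeWhile fun x => decide (x ≠ c)).map
        (subtreeMaxDepth T)).sum + depth T v

/- ------------------  node removal (statements 13, 14)  ------------------ -/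

/-- The edge set of the induced subgraph `G − u`, on the subtype `{v // v ≠ u}`. -/
def Esub (E : Finset (V × V)) (u : V) :
    Finset ({v : V // v ≠ u} × {v : V // v ≠ u}) :=
  Finset.univ.filter fun e => ((e.1 : V), (e.2 : V)) ∈ E

/-- Extend an ordered spanning tree `T'` of `G − u` to one of `G` by adding `u`
as the rightmost child of `r`. -/
def extendRight (u : V) (T' : PreTree {v : V // v ≠ u}) : PreTree V where
  parent v := if h : v = u then none else (T'.parent ⟨v, h⟩).map Subtype.val
  children w :=
    match w with
    | none => (T'.children none).map Subtype.val ++ [u]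
    | some x =>
        if hx : x = u then []
        else (T'.children (some ⟨x, hx⟩)).map Subtype.val

/-- Extend an ordered spanning tree `T'` of `G − u` to one of `G` by adding `u`
as the leftmost child of `r`. -/
def extendLeft (u : V) (T' : PreTree {v : V // v ≠ u}) : PreTree V where
  parent v := if h : v = u then none else (T'.parent ⟨v, h⟩).map Subtype.val
  children w :=
    match w with
    | none => u :: (T'.children none).map Subtype.val
    | some x =>
        if hx : x = u then []
        else (T'.children (some ⟨x, hx⟩)).map Subtype.val

/- ------------------  auxiliary development  ------------------ -/

section Aux

set_option linter.unusedSectionVars false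
open List

variable (T : PreTree V) (EL : List (V × V))

/-- The list of newly adopted candidates, given already-marked set `m`. -/
def newsL (m : Finset V) : List V → List V
  | [] => []
  | c :: cs => if c ∈ m then newsL m cs else c :: newsL (insert c m) cs

lemma enq_eq (p : Option V) (cands : List V) (s : BFSState V) :
    enq p cands s = ⟨s.queue ++ newsL s.marked cands,
      s.marked ∪ (newsL s.marked cands).toFinset,
      s.adopts ++ (newsL s.marked cands).map (fun c => (p, c))⟩ := by
  induction cands generalizing s with
  | nil => simp [enq, newsL]
  | cons c cs ih =>
    by_cases hc : c ∈ s.marked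
    · have : enq p (c :: cs) s = enq p cs s := by
        simp [enq, hc]
      rw [this, ih]
      simp [newsL, hc]
    · have : enq p (c :: cs) s =
          enq p cs ⟨s.queue ++ [c], insert c s.marked, s.adopts ++ [(p, c)]⟩ := by
        simp [enq, hc]
      rw [this, ih]
      simp only [newsL, if_neg hc, BFSState.mk.injEq]
      refine ⟨by simp, ?_, by simp⟩
      ext x
      simp only [Finset.mem_union, Finset.mem_insert, List.toFinset_cons, List.mem_toFinset]
      tauto

lemma mem_newsL {m : Finset V} {l : List V} {x : V} (hx : x ∈ newsL m l) :
    x ∈ l ∧ x ∉ m := by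
  induction l generalizing m with
  | nil => simp [newsL] at hx
  | cons c cs ih =>
    by_cases hc : c ∈ m
    · simp only [newsL, if_pos hc] at hx
      have := ih hx
      exact ⟨List.mem_cons_of_mem _ this.1, this.2⟩
    · simp only [newsL, if_neg hc] at hx
      rcases List.mem_cons.1 hx with rfl | hx
      · exact ⟨List.mem_cons_self, hc⟩
      · have := ih hx
        refine ⟨List.mem_cons_of_mem _ this.1, fun hm => this.2 ?_⟩
        exact Finset.mem_insert_of_mem hm

lemma newsL_mem {m : Finset V} {l : List V} {x : V} (hx : x ∈ l) (hm : x ∉ m) :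
    x ∈ newsL m l := by
  induction l generalizing m with
  | nil => simp at hx
  | cons c cs ih =>
    by_cases hc : c ∈ m
    · simp only [newsL, if_pos hc]
      rcases List.mem_cons.1 hx with rfl | hx
      · exact absurd hc hm
      · exact ih hx hm
    · simp only [newsL, if_neg hc]
      rcases List.mem_cons.1 hx with rfl | hx
      · exact List.mem_cons_self
      · by_cases hxc : x = c
        · subst hxc; exact List.mem_cons_self
        · refine List.mem_cons_of_mem _ (ih hx ?_)
          simp [hxc, hm]

lemma newsL_nodup (m : Finset V) (l : List V) : (newsL m l).Nodup := by
  induction l generalizing m with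
  | nil => simp [newsL]
  | cons c cs ih =>
    by_cases hc : c ∈ m
    · simp only [newsL, if_pos hc]; exact ih m
    · simp only [newsL, if_neg hc]
      refine List.nodup_cons.2 ⟨fun hmem => ?_, ih _⟩
      exact (mem_newsL hmem).2 (Finset.mem_insert_self _ _)

lemma newsL_eq_self {m : Finset V} {l : List V} (hnd : l.Nodup)
    (h : ∀ x ∈ l, x ∉ m) : newsL m l = l := by
  induction l generalizing m with
  | nil => rfl
  | cons c cs ih =>
    have hc : c ∉ m := h c (List.mem_cons_self)
    simp only [newsL, if_neg hc]
    congr 1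
    refine ih (List.nodup_cons.1 hnd).2 (fun x hx => ?_)
    have hxc : x ≠ c := fun he => (List.nodup_cons.1 hnd).1 (he ▸ hx)
    simp [hxc, h x (List.mem_cons_of_mem _ hx)]

lemma newsL_append (m : Finset V) (l₁ l₂ : List V) :
    newsL m (l₁ ++ l₂) = newsL m l₁ ++ newsL (m ∪ (newsL m l₁).toFinset) l₂ := by
  induction l₁ generalizing m with
  | nil => simp [newsL]
  | cons c cs ih =>
    by_cases hc : c ∈ m
    · simp only [List.cons_append, newsL, if_pos hc]
      exact ih m
    · simp only [List.cons_append, newsL, if_neg hc, List.toFinset_cons]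
      have h2 : insert c m ∪ (newsL (insert c m) cs).toFinset
          = m ∪ insert c (newsL (insert c m) cs).toFinset := by
        ext x
        simp only [Finset.mem_union, Finset.mem_insert]
        tauto
      rw [ih, h2]

/-- The termination measure of the BFS run. -/
def meas (s : BFSState V) : ℕ := 2 * (Fintype.card V - s.marked.card) + s.queue.length

/-- The generic invariant of the BFS run. -/
def GInv (s : BFSState V) : Prop :=
  ((s.adopts.map Prod.snd).Nodup) ∧
  s.marked = (s.adopts.map Prod.snd).toFinset ∧
  (∀ x ∈ s.queue, x ∈ s.marked) ∧
  (∀ pc ∈ s.adopts, ∀ u : V, pc.1 = some u → [u, pc.2] <+ s.adopts.map Prod.snd) ∧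
  (∀ pc ∈ s.adopts, ∀ u : V, pc.1 = some u →
    pc.2 ∈ T.children (some u) ∨ (u, pc.2) ∈ EL)

lemma GInv_enq (t : BFSState V) (hI : GInv T EL t) (p : Option V) (cands : List V)
    (hp : ∀ u : V, p = some u → u ∈ t.adopts.map Prod.snd)
    (hc : ∀ u : V, p = some u → ∀ x ∈ cands, x ∈ T.children (some u) ∨ (u, x) ∈ EL) :
    GInv T EL (enq p cands t) ∧
    (enq p cands t).marked.card = t.marked.card + (newsL t.marked cands).length ∧
    (enq p cands t).queue.length = t.queue.length + (newsL t.marked cands).length ∧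
    t.adopts <+: (enq p cands t).adopts := by
  obtain ⟨hnd, hm, hq, hsub, hedge⟩ := hI
  rw [enq_eq]
  set N := newsL t.marked cands with hN
  have hNnd : N.Nodup := newsL_nodup _ _
  have hNmem : ∀ x ∈ N, x ∈ cands ∧ x ∉ t.marked := fun x hx => mem_newsL hx
  have hdisj : Disjoint t.marked N.toFinset := by
    rw [Finset.disjoint_left]
    intro a ha haN
    exact (hNmem a (List.mem_toFinset.1 haN)).2 ha
  have hsnds : (t.adopts ++ N.map (fun c => (p, c))).map Prod.snd
      = t.adopts.map Prod.snd ++ N := by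
    simp [List.map_map, Function.comp]
  constructor
  · refine ⟨?_, ?_, ?_, ?_, ?_⟩
    · rw [hsnds, List.nodup_append]
      refine ⟨hnd, hNnd, fun a ha b haN hab => ?_⟩
      exact (hNmem a (hab ▸ haN)).2 (hm ▸ List.mem_toFinset.2 ha)
    · simp only [hsnds, List.toFinset_append, hm]
    · intro x hx
      rcases List.mem_append.1 hx with hx | hx
      · exact Finset.mem_union_left _ (hq x hx)
      · exact Finset.mem_union_right _ (List.mem_toFinset.2 hx)
    · intro pc hpc u hu
      rw [hsnds]
      rcases List.mem_append.1 hpc with hpc | hpc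
      · exact (hsub pc hpc u hu).trans (List.sublist_append_left _ _)
      · obtain ⟨c, hcN, rfl⟩ := List.mem_map.1 hpc
        simp only at hu
        have h1 : [u] <+ t.adopts.map Prod.snd := List.singleton_sublist.2 (hp u hu)
        have h2 : [c] <+ N := List.singleton_sublist.2 hcN
        exact h1.append h2
    · intro pc hpc u hu
      rcases List.mem_append.1 hpc with hpc | hpc
      · exact hedge pc hpc u hu
      · obtain ⟨c, hcN, rfl⟩ := List.mem_map.1 hpc
        simp only at hu ⊢
        exact hc u hu c (hNmem c hcN).1
  · refine ⟨?_, by simp, ⟨_, rfl⟩⟩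
    simp only
    rw [Finset.card_union_of_disjoint hdisj, List.toFinset_card_of_nodup hNnd]

lemma marked_card_lt (s : BFSState V) (c : V) (hc : c ∉ s.marked) :
    s.marked.card < Fintype.card V := by
  classical
  have : s.marked ⊂ Finset.univ :=
    ⟨Finset.subset_univ _, fun h => hc (h (Finset.mem_univ c))⟩
  simpa [Finset.card_univ] using Finset.card_lt_card this

lemma runG : ∀ (fuel : ℕ) (s : BFSState V), GInv T EL s → meas s ≤ fuel →
    s.adopts <+: imBFSAux T EL fuel s ∧
    ((imBFSAux T EL fuel s).map Prod.snd).Nodup ∧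
    (∀ v : V, v ∈ (imBFSAux T EL fuel s).map Prod.snd) ∧
    (∀ pc ∈ imBFSAux T EL fuel s, ∀ u : V, pc.1 = some u →
      [u, pc.2] <+ (imBFSAux T EL fuel s).map Prod.snd) ∧
    (∀ pc ∈ imBFSAux T EL fuel s, ∀ u : V, pc.1 = some u →
      pc.2 ∈ T.children (some u) ∨ (u, pc.2) ∈ EL) := by
  intro fuel
  induction fuel with
  | zero =>
    intro s hI hle
    obtain ⟨hnd, hm, hq, hsub, hedge⟩ := hI
    have hcard : s.marked.card = Fintype.card V := by
      have := Finset.card_le_univ s.marked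
      simp only [meas, Nat.le_zero, Nat.add_eq_zero, Nat.mul_eq_zero] at hle
      have h1 : Fintype.card V - s.marked.card = 0 := by omega
      have := Finset.card_univ (α := V) ▸ this
      omega
    have huniv : s.marked = Finset.univ := Finset.eq_univ_of_card _ hcard
    simp only [imBFSAux]
    refine ⟨List.prefix_refl _, hnd, ?_, hsub, hedge⟩
    intro v
    have : v ∈ s.marked := huniv ▸ Finset.mem_univ v
    rw [hm] at this
    exact List.mem_toFinset.1 this
  | succ fuel ih =>
    intro s hI hle
    rcases hqe : s.queue with _ | ⟨u, rest⟩
    · -- queue empty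
      rcases hf : (T.children none).find? (fun c => decide (c ∉ s.marked)) with _ | c
      · rcases hf2 : (Finset.univ : Finset V).toList.find?
            (fun v => decide (v ∉ s.marked)) with _ | v
        · -- terminal: everything marked
          obtain ⟨hnd, hm, hq, hsub, hedge⟩ := hI
          have heq : imBFSAux T EL (fuel + 1) s = s.adopts := by
            rw [imBFSAux]; rw [hqe, hf, hf2]
          rw [heq]
          refine ⟨List.prefix_refl _, hnd, ?_, hsub, hedge⟩
          intro v
          have := List.find?_eq_none.1 hf2 v (Finset.mem_toList.2 (Finset.mem_univ v))
          simp only [decide_eq_true_eq, not_not] at this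
          rw [hm] at this
          exact List.mem_toFinset.1 this
        · -- fallback enqueue v
          have hvm : v ∉ s.marked := by
            have := List.find?_some hf2
            simpa using this
          have heq : imBFSAux T EL (fuel + 1) s
              = imBFSAux T EL fuel (enq none [v] s) := by
            rw [imBFSAux]; rw [hqe, hf, hf2]
          rw [heq]
          obtain ⟨hI', hmc, hqc, hpre⟩ := GInv_enq T EL s hI none [v]
            (fun u hu => by simp at hu) (fun u hu => by simp at hu)
          have hNv : newsL s.marked [v] = [v] :=
            newsL_eq_self (List.nodup_singleton v) (by simpa using hvm)
          have hmeas : meas (enq none [v] s) ≤ fuel := by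
            have hlt := marked_card_lt s v hvm
            simp only [meas, hmc, hqc, hNv, List.length_singleton, hqe] at hle ⊢
            omega
          obtain ⟨h1, h2, h3, h4, h5⟩ := ih _ hI' hmeas
          exact ⟨hpre.trans h1, h2, h3, h4, h5⟩
      · -- enqueue root child c
        have hvm : c ∉ s.marked := by
          have := List.find?_some hf
          simpa using this
        have heq : imBFSAux T EL (fuel + 1) s
            = imBFSAux T EL fuel (enq none [c] s) := by
          rw [imBFSAux]; rw [hqe, hf]
        rw [heq]
        obtain ⟨hI', hmc, hqc, hpre⟩ := GInv_enq T EL s hI none [c]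
          (fun u hu => by simp at hu) (fun u hu => by simp at hu)
        have hNv : newsL s.marked [c] = [c] :=
          newsL_eq_self (List.nodup_singleton c) (by simpa using hvm)
        have hmeas : meas (enq none [c] s) ≤ fuel := by
          have hlt := marked_card_lt s c hvm
          simp only [meas, hmc, hqc, hNv, List.length_singleton, hqe] at hle ⊢
          omega
        obtain ⟨h1, h2, h3, h4, h5⟩ := ih _ hI' hmeas
        exact ⟨hpre.trans h1, h2, h3, h4, h5⟩
    · -- dequeue u
      set cands := T.children (some u) ++
        (EL.filter fun e => decide (e.1 = u)).map Prod.snd with hcands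
      have heq : imBFSAux T EL (fuel + 1) s
          = imBFSAux T EL fuel (enq (some u) cands ⟨rest, s.marked, s.adopts⟩) := by
        rw [imBFSAux]; rw [hqe]
      rw [heq]
      set t : BFSState V := ⟨rest, s.marked, s.adopts⟩ with ht
      have hIt : GInv T EL t := by
        obtain ⟨hnd, hm, hq, hsub, hedge⟩ := hI
        exact ⟨hnd, hm, fun x hx => hq x (by rw [hqe]; exact List.mem_cons_of_mem _ hx),
          hsub, hedge⟩
      have hum : u ∈ s.marked := hI.2.2.1 u (by rw [hqe]; exact List.mem_cons_self)
      obtain ⟨hI', hmc, hqc, hpre⟩ := GInv_enq T EL t hIt (some u) cands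
        (fun u' hu' => by
          obtain rfl : u' = u := by simpa using hu'.symm
          exact List.mem_toFinset.1 (hI.2.1 ▸ hum))
        (fun u' hu' x hx => by
          have huu : u' = u := by simpa using hu'.symm
          rw [huu]
          rcases List.mem_append.1 hx with hx | hx
          · exact Or.inl hx
          · obtain ⟨e, he, rfl⟩ := List.mem_map.1 hx
            have hf := List.mem_filter.1 he
            right
            obtain ⟨e1, e2⟩ := e
            have he1 : e1 = u := by simpa using hf.2
            subst he1
            exact hf.1)
      have hmeas : meas (enq (some u) cands t) ≤ fuel := by
        have hcle : (enq (some u) cands t).marked.card ≤ Fintype.card V :=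
          Finset.card_le_univ _ |>.trans (by simp [Finset.card_univ])
        simp only [meas, hmc, hqc] at hle hcle ⊢
        simp only [hqe, List.length_cons] at hle
        have e1 : t.marked.card = s.marked.card := rfl
        have e2 : t.queue.length = rest.length := rfl
        omega
      obtain ⟨h1, h2, h3, h4, h5⟩ := ih _ hI' hmeas
      exact ⟨hpre.trans h1, h2, h3, h4, h5⟩

/- ----- depth and level order ----- -/

lemma parentStep_iterate_shift {v : Option V} {j1 j2 : ℕ}
    (h : (parentStep T)^[j1] v = (parentStep T)^[j2] v) :
    ∀ m, (parentStep T)^[j1 + m] v = (parentStep T)^[j2 + m] v := by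
  intro m
  induction m with
  | zero => simpa using h
  | succ m ihm =>
    rw [← Nat.add_assoc, ← Nat.add_assoc, Function.iterate_succ_apply',
      Function.iterate_succ_apply', ihm]

section Depth

variable (hreach : ∀ v : V, ∃ k : ℕ, (parentStep T)^[k] (some v) = none)

include hreach

lemma depth_spec (v : V) : (parentStep T)^[depth T v] (some v) = none :=
  Nat.sInf_mem (hreach v)

lemma depth_lt_ne (v : V) {j : ℕ} (hj : j < depth T v) :
    (parentStep T)^[j] (some v) ≠ none :=
  Nat.notMem_of_lt_sInf hj

lemma depth_pos (v : V) : 0 < depth T v := by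
  rcases Nat.eq_zero_or_pos (depth T v) with h | h
  · have := depth_spec T hreach v
    rw [h] at this
    simp at this
  · exact h

lemma depth_le_card (v : V) : depth T v ≤ Fintype.card V := by
  classical
  have hne : ∀ j : Fin (depth T v), ((parentStep T)^[(j : ℕ)] (some v)).isSome := by
    intro j
    have := depth_lt_ne T hreach v j.2
    exact Option.ne_none_iff_isSome.1 this
  set g : Fin (depth T v) → V := fun j => ((parentStep T)^[(j : ℕ)] (some v)).get (hne j)
    with hg
  have hinj : Function.Injective g := by
    intro j1 j2 hj
    by_contra hne12
    wlog hlt : (j1 : ℕ) < (j2 : ℕ) generalizing j1 j2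
    · exact this hj.symm (Ne.symm hne12) (by
        rcases Nat.lt_trichotomy (j1 : ℕ) (j2 : ℕ) with h | h | h
        · exact absurd h hlt
        · exact absurd (Fin.ext h) hne12
        · exact h)
    have heq : (parentStep T)^[(j1 : ℕ)] (some v) = (parentStep T)^[(j2 : ℕ)] (some v) := by
      have := congrArg some hj
      simpa [hg, Option.some_get] using this
    have := parentStep_iterate_shift T heq (depth T v - (j2 : ℕ))
    rw [show (j2 : ℕ) + (depth T v - (j2 : ℕ)) = depth T v by omega,
      depth_spec T hreach v] at this
    exact depth_lt_ne T hreach v (by omega : (j1 : ℕ) + (depth T v - (j2 : ℕ)) < depth T v) this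
  simpa using Fintype.card_le_of_injective g hinj

lemma depth_parent {v u : V} (h : T.parent v = some u) :
    depth T v = depth T u + 1 := by
  have hstep : ∀ k : ℕ, (parentStep T)^[k + 1] (some v) = (parentStep T)^[k] (some u) := by
    intro k
    rw [Function.iterate_succ_apply]
    simp [parentStep, h]
  have h1 : depth T v ≤ depth T u + 1 := by
    apply Nat.sInf_le
    show (parentStep T)^[depth T u + 1] (some v) = none
    rw [hstep]
    exact depth_spec T hreach u
  have h2 : depth T u ≤ depth T v - 1 := by
    apply Nat.sInf_le
    have hpos := depth_pos T hreach v
    show (parentStep T)^[depth T v - 1] (some u) = none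
    rw [← hstep]
    rw [show depth T v - 1 + 1 = depth T v by omega]
    exact depth_spec T hreach v
  have hpos := depth_pos T hreach v
  omega

end Depth

/-- `bfseq T q` : the level order listing of the subtrees rooted at the nodes of `q`. -/
def bfseq (q : List V) : List V :=
  (List.range (Fintype.card V + 1)).flatMap fun k => (expand T)^[k] q

lemma expand_append (A B : List V) : expand T (A ++ B) = expand T A ++ expand T B :=
  List.flatMap_append

lemma expand_nil : expand T [] = [] := rfl

lemma expand_iterate_nil (k : ℕ) : (expand T)^[k] ([] : List V) = [] := by
  induction k with
  | zero => rfl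
  | succ k ihk => rw [Function.iterate_succ_apply', ihk]; rfl

lemma expand_singleton (u : V) : expand T [u] = T.children (some u) := by
  simp [expand]

section Tree

variable (hreach : ∀ v : V, ∃ k : ℕ, (parentStep T)^[k] (some v) = none)
    (hiff : ∀ (w : Option V) (v : V), v ∈ T.children w ↔ T.parent v = w)

include hreach hiff

lemma mem_expand_iterate_depth {q : List V} {k : ℕ} {x : V}
    (hx : x ∈ (expand T)^[k] q) : k + 1 ≤ depth T x := by
  induction k generalizing x with
  | zero => exact depth_pos T hreach x
  | succ k ihk =>
    rw [Function.iterate_succ_apply'] at hx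
    obtain ⟨u, hu, hxu⟩ := List.mem_flatMap.1 hx
    have hpar : T.parent x = some u := (hiff _ _).1 hxu
    have := ihk hu
    rw [depth_parent T hreach hpar]
    omega

lemma expand_vanish (q : List V) : (expand T)^[Fintype.card V + 1] q = [] := by
  rw [List.eq_nil_iff_forall_not_mem]
  intro x hx
  have h1 := mem_expand_iterate_depth T hreach hiff hx
  have h2 := depth_le_card T hreach x
  omega

lemma bfseq_unfold (q : List V) : bfseq T q = q ++ bfseq T (expand T q) := by
  have h1 : bfseq T (expand T q)
      = (List.range (Fintype.card V + 1)).flatMap fun k => (expand T)^[k + 1] q := by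
    unfold bfseq
    apply List.flatMap_congr
    intro k _
    rw [← Function.iterate_succ_apply]
  have h2 : (List.range (Fintype.card V + 1 + 1)).flatMap (fun k => (expand T)^[k] q)
      = q ++ (List.range (Fintype.card V + 1)).flatMap fun k => (expand T)^[k + 1] q := by
    conv_lhs => rw [List.range_succ_eq_map]
    rw [List.flatMap_cons, List.flatMap_map]
    rfl
  have h3 : [Fintype.card V + 1].flatMap (fun k => (expand T)^[k] q) = [] := by
    simp [expand_vanish T hreach hiff]
  rw [h1, ← h2, List.range_succ, List.flatMap_append, h3, List.append_nil]
  rfl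

lemma bfseq_nil : bfseq T ([] : List V) = [] := by
  unfold bfseq
  rw [List.eq_nil_iff_forall_not_mem]
  intro x hx
  obtain ⟨k, _, hk⟩ := List.mem_flatMap.1 hx
  rw [expand_iterate_nil] at hk
  simp at hk

lemma bfseq_rot_aux : ∀ (m : ℕ) (A B : List V), (expand T)^[m] A = [] →
    (expand T)^[m] B = [] →
    bfseq T (A ++ B) = A ++ bfseq T (B ++ expand T A) := by
  intro m
  induction m with
  | zero =>
    intro A B hA hB
    simp only [Function.iterate_zero, id] at hA hB
    subst hA; subst hB
    simp [bfseq_nil T hreach hiff, expand_nil]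
  | succ m ihm =>
    intro A B hA hB
    rw [Function.iterate_succ_apply] at hA hB
    rw [bfseq_unfold T hreach hiff (A ++ B), expand_append]
    rw [ihm _ _ hA hB]
    rw [bfseq_unfold T hreach hiff (B ++ expand T A), expand_append]
    simp [List.append_assoc]

lemma bfseq_rot (A B : List V) :
    bfseq T (A ++ B) = A ++ bfseq T (B ++ expand T A) :=
  bfseq_rot_aux T hreach hiff (Fintype.card V + 1) A B
    (expand_vanish T hreach hiff A) (expand_vanish T hreach hiff B)

lemma bfseq_cons (u : V) (rest : List V) :
    bfseq T (u :: rest) = u :: bfseq T (rest ++ T.children (some u)) := by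
  have := bfseq_rot T hreach hiff [u] rest
  simpa [expand_singleton] using this

end Tree

/- ----- small list helpers ----- -/

lemma indexOf_append_left {l₁ l₂ : List V} {a : V} (h : a ∈ l₁) :
    (l₁ ++ l₂).idxOf a = l₁.idxOf a := by
  induction l₁ with
  | nil => simp at h
  | cons c cs ih =>
    by_cases hca : c = a
    · subst hca; simp [List.idxOf_cons_self]
    · rcases List.mem_cons.1 h with rfl | h
      · exact absurd rfl hca
      · rw [List.cons_append, List.idxOf_cons_ne _ hca, List.idxOf_cons_ne _ hca, ih h]

lemma indexOf_append_right {l₁ l₂ : List V} {a : V} (h : a ∉ l₁) :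
    (l₁ ++ l₂).idxOf a = l₁.length + l₂.idxOf a := by
  induction l₁ with
  | nil => simp
  | cons c cs ih =>
    have hca : c ≠ a := fun he => h (he ▸ List.mem_cons_self)
    rw [List.cons_append, List.idxOf_cons_ne _ hca, List.length_cons,
      ih (fun hm => h (List.mem_cons_of_mem _ hm))]
    omega

lemma adopts_prefix : ∀ (fuel : ℕ) (s : BFSState V),
    s.adopts <+: imBFSAux T EL fuel s := by
  intro fuel
  induction fuel with
  | zero => intro s; exact List.prefix_refl _
  | succ fuel ih =>
    intro s
    rcases hqe : s.queue with _ | ⟨u, rest⟩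
    · rcases hf : (T.children none).find? (fun c => decide (c ∉ s.marked)) with _ | c
      · rcases hf2 : (Finset.univ : Finset V).toList.find?
            (fun v => decide (v ∉ s.marked)) with _ | v
        · have heq : imBFSAux T EL (fuel + 1) s = s.adopts := by
            rw [imBFSAux]; rw [hqe, hf, hf2]
          rw [heq]
        · have heq : imBFSAux T EL (fuel + 1) s
              = imBFSAux T EL fuel (enq none [v] s) := by
            rw [imBFSAux]; rw [hqe, hf, hf2]
          rw [heq]
          refine List.IsPrefix.trans ?_ (ih _)
          rw [enq_eq]
          exact ⟨_, rfl⟩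
      · have heq : imBFSAux T EL (fuel + 1) s
            = imBFSAux T EL fuel (enq none [c] s) := by
          rw [imBFSAux]; rw [hqe, hf]
        rw [heq]
        refine List.IsPrefix.trans ?_ (ih _)
        rw [enq_eq]
        exact ⟨_, rfl⟩
    · have heq : imBFSAux T EL (fuel + 1) s
          = imBFSAux T EL fuel (enq (some u) (T.children (some u) ++
            (EL.filter fun e => decide (e.1 = u)).map Prod.snd)
            ⟨rest, s.marked, s.adopts⟩) := by
        rw [imBFSAux]; rw [hqe]
      rw [heq]
      refine List.IsPrefix.trans ?_ (ih _)
      rw [enq_eq]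
      exact ⟨_, rfl⟩

lemma find?_snd_eq {ad : List (Option V × V)} (hnd : (ad.map Prod.snd).Nodup)
    {pc : Option V × V} (hpc : pc ∈ ad) :
    ad.find? (fun x => decide (x.2 = pc.2)) = some pc := by
  induction ad with
  | nil => simp at hpc
  | cons a as ih =>
    rcases List.mem_cons.1 hpc with rfl | hpc
    · exact List.find?_cons_of_pos (by simp)
    · have hne : a.2 ≠ pc.2 := by
        intro he
        have h1 : pc.2 ∈ as.map Prod.snd := List.mem_map.2 ⟨pc, hpc, rfl⟩
        rw [List.map_cons, List.nodup_cons] at hnd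
        exact hnd.1 (he ▸ h1)
      rw [List.find?_cons_of_neg (by simp [hne])]
      exact ih (by rw [List.map_cons, List.nodup_cons] at hnd; exact hnd.2) hpc

section Clean

variable (hreach : ∀ v : V, ∃ k : ℕ, (parentStep T)^[k] (some v) = none)
    (hiff : ∀ (w : Option V) (v : V), v ∈ T.children w ↔ T.parent v = w)
    (hchnd : ∀ w : Option V, (T.children w).Nodup)

include hreach hiff hchnd

lemma runC : ∀ (fuel : ℕ) (s : BFSState V) (rdone rrest done : List V),
    T.children none = rdone ++ rrest →
    s.adopts = (done ++ s.queue).map (fun x => (T.parent x, x)) →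
    s.marked = (done ++ s.queue).toFinset →
    (done ++ s.queue).Nodup →
    done ++ bfseq T s.queue = rdone.flatMap (fun c => bfseq T [c]) →
    (∀ y ∈ done ++ s.queue, ∀ x : V, T.parent y = some x → x ∈ done) →
    (∀ c ∈ rdone, c ∈ done ++ s.queue) →
    (∀ c ∈ rrest, c ∉ done ++ s.queue) →
    meas s ≤ fuel →
    (∀ pc ∈ imBFSAux T EL fuel s, pc.1 = T.parent pc.2) →
    ((imBFSAux T EL fuel s).map Prod.snd
        = done ++ bfseq T s.queue ++ rrest.flatMap (fun c => bfseq T [c])) ∧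
    ((imBFSAux T EL fuel s).map Prod.snd).Nodup ∧
    (∀ u : V, u ∈ done → (imBFSAux T EL fuel s).filter (fun pc => decide (pc.1 = some u))
        = s.adopts.filter (fun pc => decide (pc.1 = some u))) ∧
    (∀ u : V, u ∉ done →
      ((imBFSAux T EL fuel s).filter (fun pc => decide (pc.1 = some u))).map Prod.snd
        = T.children (some u)) ∧
    ((imBFSAux T EL fuel s).filter (fun pc => decide (pc.1 = none))
        = s.adopts.filter (fun pc => decide (pc.1 = none))
          ++ rrest.map (fun c => ((none : Option V), c))) ∧
    (∀ u v w : V, (u, v) ∈ EL → T.parent v = some w → u ≠ w → u ∉ done →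
      ((imBFSAux T EL fuel s).map Prod.snd).idxOf u
        < ((imBFSAux T EL fuel s).map Prod.snd).idxOf w → False) := by
  intro fuel
  induction fuel with
  | zero =>
    intro s rdone rrest done hroot h2 h3 h4 h5 h7 h8 h9 hle hH
    have hq : s.queue = [] := by
      simp only [meas, Nat.le_zero] at hle
      exact List.eq_nil_of_length_eq_zero (by omega)
    have hcard : s.marked.card = Fintype.card V := by
      have h : s.marked.card ≤ Fintype.card V := by
        simpa using Finset.card_le_univ s.marked
      simp only [meas, Nat.le_zero] at hle
      omega
    have hall : ∀ v : V, v ∈ s.marked := by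
      have : s.marked = Finset.univ := Finset.eq_univ_of_card _ hcard
      intro v; rw [this]; exact Finset.mem_univ v
    have heqR : imBFSAux T EL 0 s = s.adopts := rfl
    have hsnd : s.adopts.map Prod.snd = done := by
      rw [h2, hq, List.append_nil, List.map_map,
        show (Prod.snd ∘ fun x : V => (T.parent x, x)) = id from rfl, List.map_id]
    have hrrest : rrest = [] := by
      rw [List.eq_nil_iff_forall_not_mem]
      intro c hc
      have h1 := h9 c hc
      have hcm := hall c
      rw [h3] at hcm
      exact h1 (List.mem_toFinset.1 hcm)
    have hdall : ∀ v : V, v ∈ done := by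
      intro v
      have := hall v
      rw [h3, hq, List.append_nil] at this
      exact List.mem_toFinset.1 this
    refine ⟨?_, ?_, ?_, ?_, ?_, ?_⟩
    · rw [heqR, hsnd, hq, bfseq_nil T hreach hiff, hrrest]; simp
    · rw [heqR, hsnd]
      have := h4; rw [hq, List.append_nil] at this; exact this
    · intro u _; rw [heqR]
    · intro u hu; exact absurd (hdall u) hu
    · rw [heqR, hrrest]; simp
    · intro u v w _ _ _ hdone _; exact hdone (hdall u)
  | succ fuel ih =>
    intro s rdone rrest done hroot h2 h3 h4 h5 h7 h8 h9 hle hH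
    rcases hqe : s.queue with _ | ⟨u, rest⟩
    · -- queue empty
      rcases hf : (T.children none).find? (fun c => decide (c ∉ s.marked)) with _ | c
      · rcases hf2 : (Finset.univ : Finset V).toList.find?
            (fun v => decide (v ∉ s.marked)) with _ | v
        · -- terminal
          have heqR : imBFSAux T EL (fuel + 1) s = s.adopts := by
            rw [imBFSAux]; rw [hqe, hf, hf2]
          have hall : ∀ v : V, v ∈ s.marked := by
            intro v
            have := List.find?_eq_none.1 hf2 v (Finset.mem_toList.2 (Finset.mem_univ v))
            simpa using this
          have hsnd : s.adopts.map Prod.snd = done := by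
            rw [h2, hqe, List.append_nil, List.map_map,
              show (Prod.snd ∘ fun x : V => (T.parent x, x)) = id from rfl, List.map_id]
          have hrrest : rrest = [] := by
            rw [List.eq_nil_iff_forall_not_mem]
            intro c hc
            have h1 := h9 c hc
            have hcm := hall c
            rw [h3] at hcm
            exact h1 (List.mem_toFinset.1 hcm)
          have hdall : ∀ v : V, v ∈ done := by
            intro v
            have := hall v
            rw [h3, hqe, List.append_nil] at this
            exact List.mem_toFinset.1 this
          refine ⟨?_, ?_, ?_, ?_, ?_, ?_⟩
          · rw [heqR, hsnd, bfseq_nil T hreach hiff, hrrest]; simp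
          · rw [heqR, hsnd]
            have := h4; rw [hqe, List.append_nil] at this; exact this
          · intro u _; rw [heqR]
          · intro u hu; exact absurd (hdall u) hu
          · rw [heqR, hrrest]; simp
          · intro u v w _ _ _ hdone _; exact hdone (hdall u)
        · -- fallback : impossible under H
          exfalso
          have heqR : imBFSAux T EL (fuel + 1) s
              = imBFSAux T EL fuel (enq none [v] s) := by
            rw [imBFSAux]; rw [hqe, hf, hf2]
          have hvm : v ∉ s.marked := by
            have := List.find?_some hf2
            simpa using this
          have hrec : ((none : Option V), v) ∈ imBFSAux T EL (fuel + 1) s := by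
            rw [heqR]
            refine List.IsPrefix.mem ?_ (adopts_prefix T EL fuel _)
            rw [enq_eq]
            have hN : newsL s.marked [v] = [v] :=
              newsL_eq_self (List.nodup_singleton v) (by simpa using hvm)
            rw [hN]
            simp
          have hpv : T.parent v = none := (hH _ hrec).symm
          have hvroot : v ∈ T.children none := (hiff none v).2 hpv
          have := List.find?_eq_none.1 hf v hvroot
          simp only [decide_eq_true_eq, not_not] at this
          exact hvm this
      · -- enqueue next root child c
        have hcm : c ∉ s.marked := by
          have := List.find?_some hf
          simpa using this
        have hcroot : c ∈ T.children none := List.mem_of_find?_eq_some hf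
        have heqR : imBFSAux T EL (fuel + 1) s
            = imBFSAux T EL fuel (enq none [c] s) := by
          rw [imBFSAux]; rw [hqe, hf]
        have hrdone_m : ∀ x ∈ rdone, ¬ (decide (x ∉ s.marked) = true) := by
          intro x hx
          have := h8 x hx
          rw [hqe, List.append_nil] at this
          simp only [decide_eq_true_eq, not_not]
          rw [h3, hqe, List.append_nil]
          exact List.mem_toFinset.2 this
        rcases hrr : rrest with _ | ⟨c₀, rtail⟩
        · exfalso
          rw [hrr, List.append_nil] at hroot
          rw [hroot] at hf
          rw [List.find?_eq_none.2 hrdone_m] at hf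
          exact nomatch hf
        · have hc₀m : c₀ ∉ s.marked := by
            have := h9 c₀ (hrr ▸ List.mem_cons_self)
            rw [h3]
            intro hmem
            exact this (List.mem_toFinset.1 hmem)
          have hceq : c = c₀ := by
            rw [hroot, hrr, List.find?_append, List.find?_eq_none.2 hrdone_m,
              Option.none_or, List.find?_cons_of_pos (by simpa using hc₀m)] at hf
            exact (Option.some.injEq _ _ ▸ hf).symm
          subst hceq
          have hN : newsL s.marked [c] = [c] :=
            newsL_eq_self (List.nodup_singleton c) (by simpa using hcm)
          have hs' : enq none [c] s
              = ⟨s.queue ++ [c], s.marked ∪ [c].toFinset,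
                  s.adopts ++ [((none : Option V), c)]⟩ := by
            rw [enq_eq, hN]; rfl
          have hpc : T.parent c = none := (hiff none c).1 hcroot
          -- invariant clauses for the new state
          have hQ : (enq none [c] s).queue = s.queue ++ [c] := by rw [hs']
          have hM : (enq none [c] s).marked = s.marked ∪ [c].toFinset := by rw [hs']
          have hA : (enq none [c] s).adopts = s.adopts ++ [((none : Option V), c)] := by
            rw [hs']
          have hq' : (enq none [c] s).queue = [c] := by rw [hQ, hqe]; rfl
          have hcdone : c ∉ done ++ s.queue := h9 c (hrr ▸ List.mem_cons_self)
          have k2 : (enq none [c] s).adopts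
              = (done ++ (enq none [c] s).queue).map (fun x => (T.parent x, x)) := by
            rw [hA, hq', h2, hqe, List.append_nil, List.map_append]
            simp [hpc]
          have k3 : (enq none [c] s).marked = (done ++ (enq none [c] s).queue).toFinset := by
            rw [hM, hq', h3, hqe]
            simp
          have k4 : (done ++ (enq none [c] s).queue).Nodup := by
            rw [hq', List.nodup_append]
            have h4' := h4; rw [hqe, List.append_nil] at h4'
            refine ⟨h4', List.nodup_singleton c, ?_⟩
            intro a ha b hb hac
            rw [List.mem_singleton] at hb
            subst hb
            subst hac
            exact hcdone (by rw [hqe, List.append_nil]; exact ha)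
          have k5 : done ++ bfseq T (enq none [c] s).queue
              = (rdone ++ [c]).flatMap (fun x => bfseq T [x]) := by
            rw [hq', List.flatMap_append]
            have h5' := h5; rw [hqe, bfseq_nil T hreach hiff, List.append_nil] at h5'
            rw [← h5']
            simp
          have k7 : ∀ y ∈ done ++ (enq none [c] s).queue, ∀ x : V,
              T.parent y = some x → x ∈ done := by
            intro y hy x hx
            rw [hq'] at hy
            rcases List.mem_append.1 hy with hy | hy
            · exact h7 y (List.mem_append_left _ hy) x hx
            · rw [List.mem_singleton] at hy
              subst hy
              rw [hpc] at hx
              exact nomatch hx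
          have k8 : ∀ x ∈ rdone ++ [c], x ∈ done ++ (enq none [c] s).queue := by
            intro x hx
            rw [hq']
            rcases List.mem_append.1 hx with hx | hx
            · have := h8 x hx
              rw [hqe, List.append_nil] at this
              exact List.mem_append_left _ this
            · exact List.mem_append_right _ hx
          have k9 : ∀ x ∈ rtail, x ∉ done ++ (enq none [c] s).queue := by
            intro x hx
            rw [hq']
            intro hmem
            rcases List.mem_append.1 hmem with hmem | hmem
            · exact h9 x (hrr ▸ List.mem_cons_of_mem _ hx)
                (by rw [hqe, List.append_nil]; exact hmem)
            · rw [List.mem_singleton] at hmem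
              subst hmem
              have := hchnd none
              rw [hroot, hrr, List.nodup_append] at this
              exact (List.nodup_cons.1 this.2.1).1 hx
          have hmeas : meas (enq none [c] s) ≤ fuel := by
            have hlt := marked_card_lt s c hcm
            have hcardm : (enq none [c] s).marked.card = s.marked.card + 1 := by
              rw [hM]
              rw [Finset.card_union_of_disjoint]
              · simp
              · simp [Finset.disjoint_left, hcm]
            have hql : (enq none [c] s).queue.length = 1 := by rw [hq']; rfl
            simp only [meas, hqe, List.length_nil] at hle
            simp only [meas, hcardm, hql]
            omega
          have hH' : ∀ pc ∈ imBFSAux T EL fuel (enq none [c] s),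
              pc.1 = T.parent pc.2 := by
            intro pc hpc'
            exact hH pc (by rw [heqR]; exact hpc')
          obtain ⟨O1, O0, O2, O3, O4, O5⟩ := ih (enq none [c] s) (rdone ++ [c]) rtail done
            (by rw [hroot, hrr]; simp) k2 k3 k4 k5 k7 k8 k9 hmeas hH'
          rw [heqR]
          refine ⟨?_, O0, ?_, O3, ?_, fun u v w ha hb hc' hd he => O5 u v w ha hb hc' hd he⟩
          · rw [O1, bfseq_nil T hreach hiff, hq']
            simp [List.flatMap_cons]
          · intro u hu
            rw [O2 u hu, hA]
            simp only [List.filter_append]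
            have : List.filter (fun pc => decide (pc.1 = some u)) [((none : Option V), c)]
                = [] := by simp
            rw [this, List.append_nil]
          · rw [O4, hA]
            simp only [List.filter_append]
            have : List.filter (fun pc => decide (pc.1 = none)) [((none : Option V), c)]
                = [((none : Option V), c)] := by simp
            rw [this]
            simp
    · -- dequeue u
      have heqR : imBFSAux T EL (fuel + 1) s
          = imBFSAux T EL fuel (enq (some u) (T.children (some u) ++
            (EL.filter fun e => decide (e.1 = u)).map Prod.snd)
            ⟨rest, s.marked, s.adopts⟩) := by
        rw [imBFSAux]; rw [hqe]
      set ELc := (EL.filter fun e => decide (e.1 = u)).map Prod.snd with hELc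
      set t : BFSState V := ⟨rest, s.marked, s.adopts⟩ with ht
      have hudone : u ∉ done := by
        have h4' := h4
        rw [hqe, List.nodup_append] at h4'
        intro hu
        exact h4'.2.2 u hu u List.mem_cons_self rfl
      have hch_un : ∀ x ∈ T.children (some u), x ∉ (done ++ s.queue) := by
        intro x hx hmem
        have hpar : T.parent x = some u := (hiff _ _).1 hx
        exact hudone (h7 x hmem u hpar)
      have hch_unm : ∀ x ∈ T.children (some u), x ∉ s.marked := by
        intro x hx hmem
        exact hch_un x hx (by rw [h3] at hmem; exact List.mem_toFinset.1 hmem)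
      have hnews1 : newsL s.marked (T.children (some u)) = T.children (some u) :=
        newsL_eq_self (hchnd _) hch_unm
      have hnewsapp : newsL s.marked (T.children (some u) ++ ELc)
          = T.children (some u) ++ newsL (s.marked ∪ (T.children (some u)).toFinset) ELc := by
        rw [newsL_append, hnews1]
      have hnews2 : newsL (s.marked ∪ (T.children (some u)).toFinset) ELc = [] := by
        rcases hne : newsL (s.marked ∪ (T.children (some u)).toFinset) ELc with _ | ⟨v₀, tl⟩
        · rfl
        · exfalso
          have hv₀ : v₀ ∈ ELc ∧ v₀ ∉ s.marked ∪ (T.children (some u)).toFinset :=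
            mem_newsL (hne ▸ List.mem_cons_self)
          have hrec : ((some u : Option V), v₀) ∈ imBFSAux T EL (fuel + 1) s := by
            rw [heqR]
            refine List.IsPrefix.mem ?_ (adopts_prefix T EL fuel _)
            rw [enq_eq]
            refine List.mem_append_right _ (List.mem_map.2 ⟨v₀, ?_, rfl⟩)
            show v₀ ∈ newsL t.marked (T.children (some u) ++ ELc)
            rw [show t.marked = s.marked from rfl, hnewsapp, hne]
            exact List.mem_append_right _ (List.mem_cons_self)
          have hpv : T.parent v₀ = some u := (hH _ hrec).symm
          have : v₀ ∈ T.children (some u) := (hiff _ _).2 hpv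
          exact hv₀.2 (Finset.mem_union_right _ (List.mem_toFinset.2 this))
      have hnews : newsL s.marked (T.children (some u) ++ ELc) = T.children (some u) := by
        rw [hnewsapp, hnews2, List.append_nil]
      have hs' : enq (some u) (T.children (some u) ++ ELc) t
          = ⟨rest ++ T.children (some u), s.marked ∪ (T.children (some u)).toFinset,
              s.adopts ++ (T.children (some u)).map (fun c => ((some u : Option V), c))⟩ := by
        rw [enq_eq]
        show BFSState.mk _ _ _ = _
        rw [show t.marked = s.marked from rfl, hnews]
      set s' := enq (some u) (T.children (some u) ++ ELc) t with hs'def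
      -- new instantiation
      have hq' : s'.queue = rest ++ T.children (some u) := by rw [hs']
      have hM' : s'.marked = s.marked ∪ (T.children (some u)).toFinset := by rw [hs']
      have hA' : s'.adopts
          = s.adopts ++ (T.children (some u)).map (fun c => ((some u : Option V), c)) := by
        rw [hs']
      have hmapch : (T.children (some u)).map (fun c => ((some u : Option V), c))
          = (T.children (some u)).map (fun x => (T.parent x, x)) := by
        apply List.map_congr_left
        intro a ha
        rw [(hiff _ _).1 ha]
      have hseteq : done ++ [u] ++ s'.queue = (done ++ s.queue) ++ T.children (some u) := by
        rw [hq', hqe]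
        simp
      have k2 : s'.adopts = (done ++ [u] ++ s'.queue).map (fun x => (T.parent x, x)) := by
        rw [hA', hseteq, h2, hmapch, ← List.map_append]
      have k3 : s'.marked = (done ++ [u] ++ s'.queue).toFinset := by
        rw [hM', hseteq, h3]
        simp
      have k4 : (done ++ [u] ++ s'.queue).Nodup := by
        rw [hseteq, List.nodup_append]
        refine ⟨h4, hchnd _, ?_⟩
        intro a ha b hach hab
        subst hab
        exact hch_un a hach ha
      have k5 : done ++ [u] ++ bfseq T s'.queue = rdone.flatMap (fun c => bfseq T [c]) := by
        rw [hq', ← h5, hqe, bfseq_cons T hreach hiff]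
        simp
      have k7 : ∀ y ∈ done ++ [u] ++ s'.queue, ∀ x : V,
          T.parent y = some x → x ∈ done ++ [u] := by
        intro y hy x hx
        rw [hseteq] at hy
        rcases List.mem_append.1 hy with hy | hy
        · exact List.mem_append_left _ (h7 y hy x hx)
        · have : T.parent y = some u := (hiff _ _).1 hy
          rw [this] at hx
          obtain rfl : u = x := Option.some.injEq _ _ ▸ hx
          exact List.mem_append_right _ (List.mem_singleton.2 rfl)
      have k8 : ∀ c ∈ rdone, c ∈ done ++ [u] ++ s'.queue := by
        intro c hc
        rw [hseteq]
        exact List.mem_append_left _ (h8 c hc)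
      have k9 : ∀ c ∈ rrest, c ∉ done ++ [u] ++ s'.queue := by
        intro c hc hmem
        rw [hseteq] at hmem
        rcases List.mem_append.1 hmem with hmem | hmem
        · exact h9 c hc hmem
        · have : T.parent c = some u := (hiff _ _).1 hmem
          have hc2 : c ∈ T.children none := by rw [hroot]; exact List.mem_append_right _ hc
          rw [(hiff _ _).1 hc2] at this
          exact nomatch this
      have hmeas : meas s' ≤ fuel := by
        have hdisj : Disjoint s.marked (T.children (some u)).toFinset := by
          rw [Finset.disjoint_left]
          intro a ha haN
          exact hch_unm a (List.mem_toFinset.1 haN) ha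
        have hcardm : s'.marked.card
            = s.marked.card + (T.children (some u)).length := by
          rw [hM', Finset.card_union_of_disjoint hdisj,
            List.toFinset_card_of_nodup (hchnd _)]
        have hql : s'.queue.length = rest.length + (T.children (some u)).length := by
          rw [hq', List.length_append]
        have hcle : s'.marked.card ≤ Fintype.card V := by
          simpa using Finset.card_le_univ s'.marked
        simp only [meas, hqe, List.length_cons] at hle
        simp only [meas, hcardm, hql]
        omega
      have hH' : ∀ pc ∈ imBFSAux T EL fuel s', pc.1 = T.parent pc.2 := by
        intro pc hpc'
        exact hH pc (by rw [heqR]; exact hpc')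
      obtain ⟨O1, O0, O2, O3, O4, O5⟩ := ih s' rdone rrest (done ++ [u])
        hroot k2 k3 k4 k5 k7 k8 k9 hmeas hH'
      have hnewfil : ∀ u₀ : V, u₀ ≠ u →
          ((T.children (some u)).map
            (fun c => ((some u : Option V), c))).filter
              (fun pc => decide (pc.1 = some u₀)) = [] := by
        intro u₀ hne
        rw [List.filter_eq_nil_iff]
        intro a ha
        obtain ⟨c, _, rfl⟩ := List.mem_map.1 ha
        simp [hne.symm]
      have hsadfil : s.adopts.filter (fun pc => decide (pc.1 = some u)) = [] := by
        rw [List.filter_eq_nil_iff]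
        intro a ha
        rw [h2] at ha
        obtain ⟨y, hy, rfl⟩ := List.mem_map.1 ha
        simp only [decide_eq_true_eq]
        intro hpar
        exact hudone (h7 y hy u hpar)
      rw [heqR]
      refine ⟨?_, O0, ?_, ?_, ?_, ?_⟩
      · rw [O1, bfseq_cons T hreach hiff, hq']
        simp
      · intro u₀ hu₀
        have hneq : u₀ ≠ u := fun he => hudone (he ▸ hu₀)
        rw [O2 u₀ (List.mem_append_left _ hu₀), hA']
        simp only [List.filter_append]
        rw [hnewfil u₀ hneq, List.append_nil]
      · intro u₀ hu₀
        by_cases hequ : u₀ = u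
        · subst hequ
          rw [O2 u₀ (List.mem_append_right _ (List.mem_singleton.2 rfl)), hA']
          simp only [List.filter_append]
          rw [hsadfil]
          have : ((T.children (some u₀)).map
              (fun c => ((some u₀ : Option V), c))).filter
                (fun pc => decide (pc.1 = some u₀))
              = (T.children (some u₀)).map (fun c => ((some u₀ : Option V), c)) := by
            rw [List.filter_eq_self]
            intro a ha
            obtain ⟨c, _, rfl⟩ := List.mem_map.1 ha
            simp
          rw [this]
          simp
        · refine O3 u₀ ?_
          intro hmem
          rcases List.mem_append.1 hmem with hmem | hmem
          · exact hu₀ hmem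
          · exact hequ (List.mem_singleton.1 hmem)
      · rw [O4, hA']
        simp only [List.filter_append]
        have : ((T.children (some u)).map
            (fun c => ((some u : Option V), c))).filter
              (fun pc => decide (pc.1 = none)) = [] := by
          rw [List.filter_eq_nil_iff]
          intro a ha
          obtain ⟨c, _, rfl⟩ := List.mem_map.1 ha
          simp
        rw [this, List.append_nil]
      · intro u₀ v₀ w₀ hEL0 hpar0 hne0 hdone0 hidx
        by_cases hequ : u₀ = u
        · rw [hequ] at hEL0 hne0 hdone0 hidx
          -- direct contradiction
          have hL : (imBFSAux T EL fuel s').map Prod.snd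
              = done ++ u :: (bfseq T (rest ++ T.children (some u))
                ++ rrest.flatMap (fun c => bfseq T [c])) := by
            rw [O1, hq']
            simp
          have hidxu : ((imBFSAux T EL fuel s').map Prod.snd).idxOf u = done.length := by
            rw [hL, indexOf_append_right hudone, List.idxOf_cons_self]
            omega
          have hw₀done : w₀ ∉ done := by
            intro hw
            have h1 : ((imBFSAux T EL fuel s').map Prod.snd).idxOf w₀
                = done.idxOf w₀ := by
              rw [hL, indexOf_append_left hw]
            have h2 : done.idxOf w₀ < done.length := List.idxOf_lt_length_iff.2 hw
            rw [hidxu, h1] at hidx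
            omega
          have hv₀ : v₀ ∉ done ++ s.queue := fun hmem => hw₀done (h7 v₀ hmem w₀ hpar0)
          have hv₀m : v₀ ∉ s.marked := by
            rw [h3]
            exact fun h => hv₀ (List.mem_toFinset.1 h)
          have hv₀ELc : v₀ ∈ ELc := by
            rw [hELc]
            exact List.mem_map.2 ⟨(u, v₀), List.mem_filter.2 ⟨hEL0, by simp⟩, rfl⟩
          have hv₀ch : v₀ ∈ T.children (some u) := by
            rw [← hnews]
            exact newsL_mem (List.mem_append_right _ hv₀ELc) hv₀m
          have hp := (hiff _ _).1 hv₀ch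
          rw [hpar0] at hp
          exact hne0 (Option.some.injEq _ _ ▸ hp).symm
        · exact O5 u₀ v₀ w₀ hEL0 hpar0 hne0
            (fun hmem => by
              rcases List.mem_append.1 hmem with hmem | hmem
              · exact hdone0 hmem
              · exact hequ (List.mem_singleton.1 hmem)) hidx

end Clean

lemma pair_sublist_indexOf_lt {l : List V} (hnd : l.Nodup) {a b : V}
    (h : [a, b] <+ l) : l.idxOf a < l.idxOf b := by
  induction l with
  | nil => cases h
  | cons c cs ih =>
    cases h with
    | cons _ h' =>
      by_cases hca : c = a
      · subst hca
        rw [List.idxOf_cons_self]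
        have hb : b ∈ cs := h'.mem (by simp)
        have hbc : c ≠ b := by
          intro he
          exact (List.nodup_cons.1 hnd).1 (he ▸ hb)
        rw [List.idxOf_cons_ne _ hbc]
        omega
      · have hcb : c ≠ b := by
          intro he
          subst he
          have hb : c ∈ cs := h'.mem (by simp)
          exact (List.nodup_cons.1 hnd).1 hb
        rw [List.idxOf_cons_ne _ hca, List.idxOf_cons_ne _ hcb]
        have := ih (List.nodup_cons.1 hnd).2 h'
        omega
    | cons_cons _ h' =>
      rw [List.idxOf_cons_self]
      have hb : b ∈ cs := h'.mem (by simp)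
      have hbc : a ≠ b := by
        intro he
        exact (List.nodup_cons.1 hnd).1 (he ▸ hb)
      rw [List.idxOf_cons_ne _ hbc]
      omega

lemma PreTree.ext' {A B : PreTree V} (h1 : A.parent = B.parent)
    (h2 : A.children = B.children) : A = B := by
  cases A; cases B; cases h1; cases h2; rfl

/-- The adoption list used by `imBFS`. -/
noncomputable def adList (T : PreTree V) (EL : List (V × V)) : List (Option V × V) :=
  imBFSAux T EL (2 * Fintype.card V + 1) ⟨[], ∅, []⟩

lemma imBFS_parent_eq (T : PreTree V) (EL : List (V × V)) (v : V) :
    (imBFS T EL).parent v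
      = match (adList T EL).find? (fun pc => decide (pc.2 = v)) with
        | some pc => pc.1
        | none => none := rfl

lemma imBFS_children_eq (T : PreTree V) (EL : List (V × V)) (w : Option V) :
    (imBFS T EL).children w
      = ((adList T EL).filter fun pc => decide (pc.1 = w)).map Prod.snd := rfl

lemma GInv_init (T : PreTree V) (EL : List (V × V)) :
    GInv T EL ⟨[], ∅, []⟩ := by
  refine ⟨by simp, by simp, by simp, by simp, by simp⟩

lemma meas_init : meas (⟨[], ∅, []⟩ : BFSState V) ≤ 2 * Fintype.card V + 1 := by
  simp [meas]

lemma runG_adList (T : PreTree V) (EL : List (V × V)) :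
    ((adList T EL).map Prod.snd).Nodup ∧
    (∀ v : V, v ∈ (adList T EL).map Prod.snd) ∧
    (∀ pc ∈ adList T EL, ∀ u : V, pc.1 = some u →
      [u, pc.2] <+ (adList T EL).map Prod.snd) ∧
    (∀ pc ∈ adList T EL, ∀ u : V, pc.1 = some u →
      pc.2 ∈ T.children (some u) ∨ (u, pc.2) ∈ EL) := by
  obtain ⟨_, h2, h3, h4, h5⟩ := runG T EL (2 * Fintype.card V + 1) ⟨[], ∅, []⟩
    (GInv_init T EL) meas_init
  exact ⟨h2, h3, h4, h5⟩

lemma imBFS_parent_of_mem (T : PreTree V) (EL : List (V × V))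
    {pc : Option V × V} (hpc : pc ∈ adList T EL) :
    (imBFS T EL).parent pc.2 = pc.1 := by
  rw [imBFS_parent_eq, find?_snd_eq (runG_adList T EL).1 hpc]

lemma imBFS_parent_exists (T : PreTree V) (EL : List (V × V)) (v : V) :
    ∃ pc ∈ adList T EL, pc.2 = v ∧ (imBFS T EL).parent v = pc.1 := by
  obtain ⟨pc, hpc, h⟩ := List.mem_map.1 ((runG_adList T EL).2.1 v)
  exact ⟨pc, hpc, h, h ▸ imBFS_parent_of_mem T EL hpc⟩

lemma imBFS_OST (E : Finset (V × V)) (T : PreTree V) (EL : List (V × V))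
    (hT : IsOST E T) (hEL : ∀ e ∈ EL, e ∈ E) : IsOST E (imBFS T EL) := by
  obtain ⟨hnd, hcomp, hsub, hedge⟩ := runG_adList T EL
  have hparent_some : ∀ v u : V, (imBFS T EL).parent v = some u →
      ∃ pc ∈ adList T EL, pc.2 = v ∧ pc.1 = some u := by
    intro v u h
    obtain ⟨pc, hpc, h2, h3⟩ := imBFS_parent_exists T EL v
    exact ⟨pc, hpc, h2, by rw [← h3, h]⟩
  refine ⟨?_, ?_, ?_, ?_⟩
  · -- reachability via strong induction on index
    have main : ∀ N : ℕ, ∀ v : V, ((adList T EL).map Prod.snd).idxOf v < N →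
        ∃ k : ℕ, (parentStep (imBFS T EL))^[k] (some v) = none := by
      intro N
      induction N with
      | zero => intro v h; omega
      | succ N ihN =>
        intro v hv
        rcases hp : (imBFS T EL).parent v with _ | u
        · exact ⟨1, by simp [parentStep, hp]⟩
        · obtain ⟨pc, hpc, hsnd, hfst⟩ := hparent_some v u hp
          have hpair := hsub pc hpc u hfst
          rw [hsnd] at hpair
          have hlt := pair_sublist_indexOf_lt hnd hpair
          obtain ⟨k, hk⟩ := ihN u (by omega)
          exact ⟨k + 1, by rw [Function.iterate_succ_apply]; simpa [parentStep, hp] using hk⟩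
    intro v
    exact main (((adList T EL).map Prod.snd).idxOf v + 1) v (by omega)
  · intro v u h
    obtain ⟨pc, hpc, hsnd, hfst⟩ := hparent_some v u h
    rcases hedge pc hpc u hfst with hch | hel
    · exact hsnd ▸ hT.2.1 pc.2 u ((hT.2.2.2 _ _).1 hch)
    · exact hsnd ▸ hEL _ hel
  · intro w
    rw [imBFS_children_eq]
    exact ((List.filter_sublist).map Prod.snd).nodup hnd
  · intro w v
    rw [imBFS_children_eq]
    constructor
    · intro hmem
      obtain ⟨pc, hpc, h2⟩ := List.mem_map.1 hmem
      have h3 := List.mem_filter.1 hpc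
      have h4 : pc.1 = w := by simpa using h3.2
      rw [← h2, imBFS_parent_of_mem T EL h3.1, h4]
    · intro hpar
      obtain ⟨pc, hpc, h2, h3⟩ := imBFS_parent_exists T EL v
      rw [hpar] at h3
      refine List.mem_map.2 ⟨pc, List.mem_filter.2 ⟨hpc, by simp [h3]⟩, h2⟩

lemma clean_step (E : Finset (V × V)) (T : PreTree V) (EL : List (V × V))
    (hT : IsOST E T) (hpar : (imBFS T EL).parent = T.parent) :
    imBFS T EL = T ∧
    ∀ u v w : V, (u, v) ∈ EL → T.parent v = some w → u ≠ w →
      (bfoList T).idxOf u < (bfoList T).idxOf w → False := by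
  obtain ⟨hreach, hedge, hchnd, hiff⟩ := hT
  have hH : ∀ pc ∈ adList T EL, pc.1 = T.parent pc.2 := by
    intro pc hpc
    have := imBFS_parent_of_mem T EL hpc
    rw [hpar] at this
    exact this.symm
  obtain ⟨O1, O0, O2, O3, O4, O5⟩ := runC T EL hreach hiff hchnd
    (2 * Fintype.card V + 1) ⟨[], ∅, []⟩ [] (T.children none) []
    (List.nil_append _).symm rfl (by simp) (by simp)
    (by simp [bfseq_nil T hreach hiff]) (by simp) (by simp) (by simp)
    meas_init hH
  have hbfo : (adList T EL).map Prod.snd = bfoList T := by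
    rw [show adList T EL = imBFSAux T EL (2 * Fintype.card V + 1) ⟨[], ∅, []⟩ from rfl, O1]
    show [] ++ bfseq T [] ++ _ = _
    rw [bfseq_nil T hreach hiff]
    rfl
  constructor
  · refine PreTree.ext' hpar (funext fun w => ?_)
    rw [imBFS_children_eq]
    rcases w with _ | u
    · show ((imBFSAux T EL (2 * Fintype.card V + 1) ⟨[], ∅, []⟩).filter
        fun pc => decide (pc.1 = none)).map Prod.snd = _
      rw [O4]
      simp
    · show ((imBFSAux T EL (2 * Fintype.card V + 1) ⟨[], ∅, []⟩).filter
        fun pc => decide (pc.1 = some u)).map Prod.snd = _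
      rw [O3 u (by simp)]
  · intro u v w hEL0 hpar0 hne0 hidx
    refine O5 u v w hEL0 hpar0 hne0 (by simp) ?_
    have : (imBFSAux T EL (2 * Fintype.card V + 1) ⟨[], ∅, []⟩).map Prod.snd
        = bfoList T := hbfo
    rw [this]
    exact hidx

lemma init_OST (E : Finset (V × V)) (T0 : PreTree V) (hT0 : IsInitTree T0) :
    IsOST E T0 := by
  obtain ⟨h1, h2, h3, h4⟩ := hT0
  refine ⟨fun v => ⟨1, by simp [parentStep, h1 v]⟩, ?_, ?_, ?_⟩
  · intro v u h
    rw [h1 v] at h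
    exact nomatch h
  · intro w
    rcases w with _ | u
    · exact h2
    · rw [h4 u]; exact List.nodup_nil
  · intro w v
    rcases w with _ | u
    · simp [h3 v, h1 v]
    · simp [h4 u, h1 v]

lemma foldl_OST (E : Finset (V × V)) (batches : List (List (V × V)))
    (hl : ∀ b ∈ batches, ∀ e ∈ b, e ∈ E) :
    ∀ T : PreTree V, IsOST E T → IsOST E (batches.foldl imBFS T) := by
  induction batches with
  | nil => intro T hT; exact hT
  | cons b bs ih =>
    intro T hT
    rw [List.foldl_cons]
    exact ih (fun b' hb' e he => hl b' (List.mem_cons_of_mem _ hb') e he) _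
      (imBFS_OST E T b hT (fun e he => hl b (List.mem_cons_self) e he))

end Aux

theorem stmt3 {V : Type} [Fintype V] [DecidableEq V]
    (hV : 1 ≤ Fintype.card V) (E : Finset (V × V))
    (hE : ∀ e ∈ E, e.1 ≠ e.2)
    (K : ℕ) (hK : 1 ≤ K)
    (batches : List (List (V × V))) (henum : IsEnum E batches.flatten)
    (hbatch : ∀ b ∈ batches, b.length ≤ K * Fintype.card V)
    (T0 : PreTree V) (hT0 : IsInitTree T0)
    (i : ℕ) (hclean : CleanPass batches ((EBstep batches)^[i] T0)) :
    IsBFSTree E (EBstep batches ((EBstep batches)^[i] T0)) := by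
  classical
  obtain ⟨henum_nd, henum_mem⟩ := henum
  have hbE : ∀ b ∈ batches, ∀ e ∈ b, e ∈ E := by
    intro b hb e he
    exact (henum_mem e).1 (List.mem_flatten.2 ⟨b, hb, he⟩)
  have hOST : ∀ n : ℕ, IsOST E ((EBstep batches)^[n] T0) := by
    intro n
    induction n with
    | zero => exact init_OST E T0 hT0
    | succ n ihn =>
      rw [Function.iterate_succ_apply']
      exact foldl_OST E batches hbE _ ihn
  set T1 := (EBstep batches)^[i] T0 with hT1def
  have hT1 : IsOST E T1 := hOST i
  have hfix : ∀ j, j ≤ batches.length → (batches.take j).foldl imBFS T1 = T1 := by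
    intro j
    induction j with
    | zero => intro _; rfl
    | succ j ihj =>
      intro hj
      have hjlt : j < batches.length := by omega
      have hbj : batches[j]? = some (batches.getD j []) := by
        rw [List.getElem?_eq_getElem hjlt, List.getD_eq_getElem?_getD,
          List.getElem?_eq_getElem hjlt]
        rfl
      rw [List.take_succ, List.foldl_append, ihj (by omega), hbj]
      show imBFS T1 (batches.getD j []) = T1
      have hcl := hclean j hjlt
      rw [ihj (by omega)] at hcl
      exact (clean_step E T1 (batches.getD j []) hT1 hcl).1
  have hEB : EBstep batches T1 = T1 := by
    have := hfix batches.length le_rfl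
    rwa [List.take_length] at this
  rw [hEB]
  refine ⟨hT1, ?_⟩
  intro e he hvb
  obtain ⟨u, v⟩ := e
  obtain ⟨h1, h2, h3⟩ := hvb
  rw [Option.ne_none_iff_exists'] at h2
  obtain ⟨w, hw⟩ := h2
  have heflat : (u, v) ∈ batches.flatten := (henum_mem _).2 he
  obtain ⟨b, hb, heb⟩ := List.mem_flatten.1 heflat
  obtain ⟨j, hjlt, hbj⟩ := List.mem_iff_getElem.1 hb
  have hgetd : batches.getD j [] = b := by
    rw [List.getD_eq_getElem?_getD, List.getElem?_eq_getElem hjlt, hbj]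
    rfl
  have hcl := hclean j hjlt
  rw [hfix j (le_of_lt hjlt)] at hcl
  have hstep := (clean_step E T1 (batches.getD j []) hT1 hcl).2
  simp only at h1 h3 hw
  rw [hw] at h3
  simp only [bfoOpt] at h3
  refine hstep u v w (hgetd ▸ heb) hw ?_ ?_
  · intro he'
    subst he'
    exact absurd h3 (lt_irrefl _)
  · simp only [bfo] at h3
    omega

end BFSFormal
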